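/- Suppose additionally that N < kmax and that u satisfies (U1) and (U2). If a strategy profile s = (s_1, s_2) is Pareto optimal over the subgame T1, then s has cut-off form on T1 with cut-off at most N: there exists an integer m with kmin ≤ m ≤ N such that for every arrival pair (t1, t2) ∈ T1 and every i ∈ {1,2}, s_i(t_i) = c if and only if t_i < m. -/

import Mathlib

/-- The two actions: `c` (canteen) and `o` (office). -/
inductive Act : Type
  | c : Act
  | o : Act
deriving DecidableEq

open Act

/-- The set of arrival pairs
`T = {(k, k+1) : kmin ≤ k ≤ kmax - 1} ∪ {(k, k-1) : kmin + 1 ≤ k ≤ kmax}`. -/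
noncomputable def T (kmin kmax : ℤ) : Finset (ℤ × ℤ) :=
  ((Finset.Icc kmin (kmax - 1)).image (fun k => (k, k + 1))) ∪
  ((Finset.Icc (kmin + 1) kmax).image (fun k => (k, k - 1)))

/-- Subgame `T1 = {(t1,t2) ∈ T : t1 ≡ kmin (mod 2)}`. -/
noncomputable def T1 (kmin kmax : ℤ) : Finset (ℤ × ℤ) :=
  (T kmin kmax).filter (fun t => t.1 % 2 = kmin % 2)

/-- Subgame `T2 = {(t1,t2) ∈ T : t2 ≡ kmin (mod 2)}`. -/
noncomputable def T2 (kmin kmax : ℤ) : Finset (ℤ × ℤ) :=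
  (T kmin kmax).filter (fun t => t.2 % 2 = kmin % 2)

/-- The expected utility of profile `s` over a set `S` of arrival pairs:
`EU_S(s) = (1/|S|) · Σ_{(t1,t2) ∈ S} u_{(t1,t2)}(s_1(t1), s_2(t2))`. -/
noncomputable def EU (u : ℤ × ℤ → Act → Act → ℝ) (s : (ℤ → Act) × (ℤ → Act))
    (S : Finset (ℤ × ℤ)) : ℝ :=
  (∑ t ∈ S, u t (s.1 t.1) (s.2 t.2)) / S.card

/-- `s` is Pareto optimal over `S` if no profile `s'` has `EU_S(s') > EU_S(s)`. -/
def ParetoOptimal (u : ℤ × ℤ → Act → Act → ℝ) (S : Finset (ℤ × ℤ))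
    (s : (ℤ → Act) × (ℤ → Act)) : Prop :=
  ¬ ∃ s' : (ℤ → Act) × (ℤ → Act), EU u s' S > EU u s S

/-- `u` satisfies conditions (U1) and (U2) on the arrival pairs of `T`. -/
def SatisfiesU1U2 (kmin kmax N : ℤ) (u : ℤ × ℤ → Act → Act → ℝ) : Prop :=
  ∀ t ∈ T kmin kmax,
    (t.1 < N ∧ t.2 < N →
      u t c c > u t o o ∧ u t o o > u t c o ∧ u t c o = u t o c) ∧
    (N ≤ t.1 ∨ N ≤ t.2 →
      u t o o > u t c o ∧ u t c o = u t o c ∧ u t o c = u t c c)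

/-- `u` is uniform with values `A > B > C` (the order is assumed separately). -/
def Uniform (kmin kmax N : ℤ) (u : ℤ × ℤ → Act → Act → ℝ) (A B C : ℝ) : Prop :=
  ∀ t ∈ T kmin kmax,
    (t.1 < N ∧ t.2 < N →
      u t c c = A ∧ u t o o = B ∧ u t c o = C ∧ u t o c = C) ∧
    (N ≤ t.1 ∨ N ≤ t.2 →
      u t o o = B ∧ u t c c = C ∧ u t c o = C ∧ u t o c = C)

/-- The cut-off strategy with cut-off `m`: canteen iff arriving strictly before `m`. -/
def cutoff (m : ℤ) : ℤ → Act := fun k => if k < m then c else o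

/-- The all-office strategy. -/
def allOffice : ℤ → Act := fun _ => o

namespace Stmt2Aux

def pairAt (kmin j : ℤ) : ℤ × ℤ := if j % 2 = kmin % 2 then (j, j + 1) else (j + 1, j)

def W (kmin : ℤ) (u : ℤ × ℤ → Act → Act → ℝ) (j : ℤ) (a b : Act) : ℝ :=
  if j % 2 = kmin % 2 then u (j, j + 1) a b else u (j + 1, j) b a

def V (kmin : ℤ) (s : (ℤ → Act) × (ℤ → Act)) (j : ℤ) : Act :=
  if j % 2 = kmin % 2 then s.1 j else s.2 j

lemma T1_eq (kmin kmax : ℤ) :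
    T1 kmin kmax = (Finset.Icc kmin (kmax - 1)).image (pairAt kmin) := by
  ext t
  simp only [T1, T, Finset.mem_filter, Finset.mem_union, Finset.mem_image, Finset.mem_Icc,
    pairAt]
  constructor
  · rintro ⟨⟨k, ⟨hk1, hk2⟩, rfl⟩ | ⟨k, ⟨hk1, hk2⟩, rfl⟩, hpar⟩
    · refine ⟨k, ⟨hk1, hk2⟩, ?_⟩
      simp only at hpar
      rw [if_pos hpar]
    · refine ⟨k - 1, ⟨by omega, by omega⟩, ?_⟩
      simp only at hpar
      have hne : ¬ ((k - 1) % 2 = kmin % 2) := by omega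
      rw [if_neg hne]
      simp only [Prod.mk.injEq]
      constructor <;> simp
  · rintro ⟨j, ⟨hj1, hj2⟩, rfl⟩
    by_cases hp : j % 2 = kmin % 2
    · rw [if_pos hp]
      exact ⟨Or.inl ⟨j, ⟨hj1, hj2⟩, rfl⟩, hp⟩
    · rw [if_neg hp]
      refine ⟨Or.inr ⟨j + 1, ⟨by omega, by omega⟩, ?_⟩, by simpa using (by omega : (j + 1) % 2 = kmin % 2)⟩
      simp only [Prod.mk.injEq]
      constructor <;> simp

lemma pairAt_injOn (kmin : ℤ) : ∀ x y : ℤ, pairAt kmin x = pairAt kmin y → x = y := by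
  intro x y h
  unfold pairAt at h
  by_cases hx : x % 2 = kmin % 2 <;> by_cases hy : y % 2 = kmin % 2 <;>
    simp only [if_pos, if_neg, hx, hy, ite_true, ite_false, Prod.mk.injEq] at h <;> omega

lemma pairAt_mem_T (kmin kmax j : ℤ) (hj1 : kmin ≤ j) (hj2 : j ≤ kmax - 1) :
    pairAt kmin j ∈ T kmin kmax := by
  unfold pairAt T
  simp only [Finset.mem_union, Finset.mem_image, Finset.mem_Icc]
  by_cases hp : j % 2 = kmin % 2
  · rw [if_pos hp]
    exact Or.inl ⟨j, ⟨hj1, hj2⟩, rfl⟩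
  · rw [if_neg hp]
    refine Or.inr ⟨j + 1, ⟨by omega, by omega⟩, ?_⟩
    simp only [Prod.mk.injEq]
    constructor <;> simp

lemma sum_T1 (kmin kmax : ℤ) (u : ℤ × ℤ → Act → Act → ℝ) (s : (ℤ → Act) × (ℤ → Act)) :
    ∑ t ∈ T1 kmin kmax, u t (s.1 t.1) (s.2 t.2)
      = ∑ j ∈ Finset.Icc kmin (kmax - 1), W kmin u j (V kmin s j) (V kmin s (j + 1)) := by
  rw [T1_eq, Finset.sum_image (fun x _ y _ h => pairAt_injOn kmin x y h)]
  refine Finset.sum_congr rfl ?_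
  intro j hj
  unfold pairAt W V
  by_cases hp : j % 2 = kmin % 2
  · have hne : ¬ ((j + 1) % 2 = kmin % 2) := by omega
    rw [if_pos hp, if_pos hp, if_pos hp, if_neg hne]
  · have hpe : (j + 1) % 2 = kmin % 2 := by omega
    rw [if_neg hp, if_neg hp, if_neg hp, if_pos hpe]

lemma hW1 (kmin kmax N : ℤ) (u : ℤ × ℤ → Act → Act → ℝ)
    (hu : SatisfiesU1U2 kmin kmax N u) (j : ℤ)
    (hj1 : kmin ≤ j) (hj2 : j ≤ kmax - 1) (hN : j + 1 < N) :
    W kmin u j c c > W kmin u j o o ∧ W kmin u j o o > W kmin u j c o ∧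
      W kmin u j c o = W kmin u j o c := by
  have h := (hu _ (pairAt_mem_T kmin kmax j hj1 hj2)).1
  unfold pairAt at h
  unfold W
  by_cases hp : j % 2 = kmin % 2
  · rw [if_pos hp] at h
    simp only [if_pos hp]
    exact h ⟨by omega, by omega⟩
  · rw [if_neg hp] at h
    simp only [if_neg hp]
    obtain ⟨q1, q2, q3⟩ := h ⟨by omega, by omega⟩
    exact ⟨q1, by linarith, by linarith⟩

lemma hW2 (kmin kmax N : ℤ) (u : ℤ × ℤ → Act → Act → ℝ)
    (hu : SatisfiesU1U2 kmin kmax N u) (j : ℤ)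
    (hj1 : kmin ≤ j) (hj2 : j ≤ kmax - 1) (hN : N ≤ j + 1) :
    W kmin u j o o > W kmin u j c o ∧ W kmin u j c o = W kmin u j o c ∧
      W kmin u j o c = W kmin u j c c := by
  have h := (hu _ (pairAt_mem_T kmin kmax j hj1 hj2)).2
  unfold pairAt at h
  unfold W
  by_cases hp : j % 2 = kmin % 2
  · rw [if_pos hp] at h
    simp only [if_pos hp]
    exact h (Or.inr (by simpa using hN))
  · rw [if_neg hp] at h
    simp only [if_neg hp]
    obtain ⟨q1, q2, q3⟩ := h (Or.inl (by simpa using hN))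
    exact ⟨by linarith, by linarith, by linarith⟩

end Stmt2Aux

/-- Any profile Pareto optimal over the subgame `T1` has cut-off form
on `T1`, with cut-off at most `N`. -/
theorem stmt_2 (kmin kmax N : ℤ) (h1 : kmin < N) (h2 : N ≤ kmax) (h3 : N < kmax)
    (u : ℤ × ℤ → Act → Act → ℝ) (hu : SatisfiesU1U2 kmin kmax N u)
    (s : (ℤ → Act) × (ℤ → Act))
    (hpo : ParetoOptimal u (T1 kmin kmax) s) :
    ∃ m : ℤ, kmin ≤ m ∧ m ≤ N ∧
      ∀ t ∈ T1 kmin kmax,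
        (s.1 t.1 = Act.c ↔ t.1 < m) ∧ (s.2 t.2 = Act.c ↔ t.2 < m) := by
  classical
  set Vs : ℤ → Act := Stmt2Aux.V kmin s with hVs
  -- payoff comparison facts
  have hA_le : ∀ l, kmin ≤ l → l ≤ kmax - 1 → l + 1 < N → ∀ a b : Act,
      Stmt2Aux.W kmin u l a b ≤ Stmt2Aux.W kmin u l c c := by
    intro l ha hb hc a b
    obtain ⟨q1, q2, q3⟩ := Stmt2Aux.hW1 kmin kmax N u hu l ha hb hc
    cases a <;> cases b <;> linarith
  have hA_lt : ∀ l, kmin ≤ l → l ≤ kmax - 1 → l + 1 < N → ∀ b : Act,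
      Stmt2Aux.W kmin u l o b < Stmt2Aux.W kmin u l c c := by
    intro l ha hb hc b
    obtain ⟨q1, q2, q3⟩ := Stmt2Aux.hW1 kmin kmax N u hu l ha hb hc
    cases b <;> linarith
  have hB_le : ∀ l, kmin ≤ l → l ≤ kmax - 1 → N ≤ l + 1 → ∀ a b : Act,
      Stmt2Aux.W kmin u l a b ≤ Stmt2Aux.W kmin u l a o := by
    intro l ha hb hc a b
    obtain ⟨q1, q2, q3⟩ := Stmt2Aux.hW2 kmin kmax N u hu l ha hb hc
    cases a <;> cases b <;> linarith
  have hB_max : ∀ l, kmin ≤ l → l ≤ kmax - 1 → N ≤ l + 1 → ∀ a b : Act,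
      Stmt2Aux.W kmin u l a b ≤ Stmt2Aux.W kmin u l o o := by
    intro l ha hb hc a b
    obtain ⟨q1, q2, q3⟩ := Stmt2Aux.hW2 kmin kmax N u hu l ha hb hc
    cases a <;> cases b <;> linarith
  have hB_lt : ∀ l, kmin ≤ l → l ≤ kmax - 1 → N ≤ l + 1 → ∀ a b : Act,
      (a = c ∨ b = c) → Stmt2Aux.W kmin u l a b < Stmt2Aux.W kmin u l o o := by
    intro l ha hb hc a b hab
    obtain ⟨q1, q2, q3⟩ := Stmt2Aux.hW2 kmin kmax N u hu l ha hb hc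
    cases a <;> cases b <;> first | linarith | simp_all
  -- T1 is nonempty
  have hne : (T1 kmin kmax).Nonempty := by
    rw [Stmt2Aux.T1_eq]
    exact ⟨_, Finset.mem_image_of_mem _ (Finset.mem_Icc.mpr ⟨le_refl kmin, by omega⟩)⟩
  have hcpos : (0 : ℝ) < (T1 kmin kmax).card := by
    exact_mod_cast Finset.card_pos.mpr hne
  -- improvement principle
  have key : ∀ f : ℤ → Act → Act,
      (∀ l, kmin ≤ l → l ≤ kmax - 1 →
        Stmt2Aux.W kmin u l (Vs l) (Vs (l + 1)) ≤
          Stmt2Aux.W kmin u l (f l (Vs l)) (f (l + 1) (Vs (l + 1)))) →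
      (∃ l, kmin ≤ l ∧ l ≤ kmax - 1 ∧
        Stmt2Aux.W kmin u l (Vs l) (Vs (l + 1)) <
          Stmt2Aux.W kmin u l (f l (Vs l)) (f (l + 1) (Vs (l + 1)))) →
      False := by
    rintro f hle ⟨l0, hl1, hl2, hlt⟩
    apply hpo
    refine ⟨(fun k => f k (s.1 k), fun k => f k (s.2 k)), ?_⟩
    have hV' : ∀ j, Stmt2Aux.V kmin (fun k => f k (s.1 k), fun k => f k (s.2 k)) j
        = f j (Vs j) := by
      intro j
      rw [hVs]
      unfold Stmt2Aux.V
      by_cases hp : j % 2 = kmin % 2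
      · rw [if_pos hp, if_pos hp]
      · rw [if_neg hp, if_neg hp]
    unfold EU
    rw [Stmt2Aux.sum_T1, Stmt2Aux.sum_T1]
    simp only [hV']
    rw [gt_iff_lt, div_lt_div_iff_of_pos_right hcpos]
    refine Finset.sum_lt_sum (fun i hi => ?_) ⟨l0, Finset.mem_Icc.mpr ⟨hl1, hl2⟩, hlt⟩
    obtain ⟨hi1, hi2⟩ := Finset.mem_Icc.mp hi
    exact hle i hi1 hi2
  -- Step A : office from N on
  have hA : ∀ j, N ≤ j → j ≤ kmax → Vs j = o := by
    by_contra hcon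
    push_neg at hcon
    obtain ⟨j0, hj0N, hj0k, hj0⟩ := hcon
    have hj0c : Vs j0 = c := by cases h : Vs j0 <;> [rfl; exact absurd h hj0]
    apply key (fun k a => if N ≤ k then o else a)
    · intro l hl1 hl2
      by_cases hcase : l + 1 < N
      · rw [if_neg (by omega : ¬ N ≤ l), if_neg (by omega : ¬ N ≤ l + 1)]
      · rw [if_pos (by omega : N ≤ l + 1)]
        by_cases hNl : N ≤ l
        · rw [if_pos hNl]
          exact hB_max l hl1 hl2 (by omega) _ _
        · rw [if_neg hNl]
          exact hB_le l hl1 hl2 (by omega) _ _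
    · by_cases hj0' : j0 ≤ kmax - 1
      · refine ⟨j0, by omega, hj0', ?_⟩
        rw [if_pos (by omega : N ≤ j0), if_pos (by omega : N ≤ j0 + 1), hj0c]
        exact hB_lt j0 (by omega) hj0' (by omega) c (Vs (j0 + 1)) (Or.inl rfl)
      · refine ⟨kmax - 1, by omega, by omega, ?_⟩
        rw [if_pos (by omega : N ≤ kmax - 1), if_pos (by omega : N ≤ kmax - 1 + 1)]
        have hVk : Vs (kmax - 1 + 1) = c := by
          rw [show kmax - 1 + 1 = j0 by omega]; exact hj0c
        rw [hVk]
        exact hB_lt (kmax - 1) (by omega) (by omega) (by omega) _ c (Or.inr rfl)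
  -- membership facts for T1
  have hT1mem : ∀ t ∈ T1 kmin kmax, kmin ≤ t.1 ∧ t.1 ≤ kmax ∧ kmin ≤ t.2 ∧ t.2 ≤ kmax ∧
      t.1 % 2 = kmin % 2 ∧ ¬ (t.2 % 2 = kmin % 2) := by
    intro t ht
    rw [Stmt2Aux.T1_eq] at ht
    obtain ⟨j, hj, rfl⟩ := Finset.mem_image.mp ht
    rw [Finset.mem_Icc] at hj
    unfold Stmt2Aux.pairAt
    by_cases hp : j % 2 = kmin % 2
    · rw [if_pos hp]
      refine ⟨?_, ?_, ?_, ?_, ?_, ?_⟩ <;> simp <;> omega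
    · rw [if_neg hp]
      refine ⟨?_, ?_, ?_, ?_, ?_, ?_⟩ <;> simp <;> omega
  -- reduction of the goal to a statement about Vs
  have hfinal : ∀ m : ℤ, (∀ j, kmin ≤ j → j ≤ kmax → (Vs j = c ↔ j < m)) →
      ∀ t ∈ T1 kmin kmax, (s.1 t.1 = Act.c ↔ t.1 < m) ∧ (s.2 t.2 = Act.c ↔ t.2 < m) := by
    intro m hm t ht
    obtain ⟨ha1, ha2, hb1, hb2, hp1, hp2⟩ := hT1mem t ht
    constructor
    · have hv : Vs t.1 = s.1 t.1 := by rw [hVs]; unfold Stmt2Aux.V; rw [if_pos hp1]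
      rw [← hv]
      exact hm t.1 ha1 ha2
    · have hv : Vs t.2 = s.2 t.2 := by rw [hVs]; unfold Stmt2Aux.V; rw [if_neg hp2]
      rw [← hv]
      exact hm t.2 hb1 hb2
  -- Step B
  by_cases hSCne : ((Finset.Icc kmin kmax).filter (fun j => Vs j = c)).Nonempty
  · set r := ((Finset.Icc kmin kmax).filter (fun j => Vs j = c)).max' hSCne with hr
    have hrmem := ((Finset.Icc kmin kmax).filter (fun j => Vs j = c)).max'_mem hSCne
    obtain ⟨hrIcc, hrc⟩ := Finset.mem_filter.mp hrmem
    obtain ⟨hr1, hr2⟩ := Finset.mem_Icc.mp hrIcc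
    have hrmax : ∀ j, kmin ≤ j → j ≤ kmax → Vs j = c → j ≤ r := fun j a b hc =>
      Finset.le_max' _ j (Finset.mem_filter.mpr ⟨Finset.mem_Icc.mpr ⟨a, b⟩, hc⟩)
    have hrN : r < N := by
      by_contra hh
      have ho := hA r (by omega) hr2
      rw [ho] at hrc
      exact Act.noConfusion hrc
    have hclaim : ∀ j, kmin ≤ j → j ≤ r → Vs j = c := by
      by_contra hcon
      push_neg at hcon
      obtain ⟨i, hi1, hi2, hio'⟩ := hcon
      have hio : Vs i = o := by cases h : Vs i <;> [exact absurd h hio'; rfl]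
      have hir : i < r := by
        have : i ≠ r := fun h => hio' (h ▸ hrc)
        omega
      apply key (fun k a => if k ≤ r then c else a)
      · intro l hl1 hl2
        by_cases hlr : l ≤ r - 1
        · rw [if_pos (by omega : l ≤ r), if_pos (by omega : l + 1 ≤ r)]
          exact hA_le l hl1 hl2 (by omega) _ _
        · rw [if_neg (by omega : ¬ l + 1 ≤ r)]
          by_cases h : l ≤ r
          · rw [if_pos h, show l = r by omega, hrc]
          · rw [if_neg h]
      · refine ⟨i, hi1, by omega, ?_⟩
        rw [if_pos (by omega : i ≤ r), if_pos (by omega : i + 1 ≤ r), hio]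
        exact hA_lt i hi1 (by omega) (by omega) _
    refine ⟨r + 1, by omega, by omega, hfinal (r + 1) ?_⟩
    intro j hj1 hj2
    constructor
    · intro hc
      have := hrmax j hj1 hj2 hc
      omega
    · intro hlt
      exact hclaim j hj1 (by omega)
  · refine ⟨kmin, le_refl _, by omega, hfinal kmin ?_⟩
    intro j hj1 hj2
    constructor
    · intro hc
      exact absurd ⟨j, Finset.mem_filter.mpr ⟨Finset.mem_Icc.mpr ⟨hj1, hj2⟩, hc⟩⟩ hSCne
    · intro h
      exact absurd h (by omega)
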